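/- arXiv:1403.8144 — 4 statements merged into one kernel-verified Lean document; each statement's English description precedes it below -/
import Mathlib

section
/- Let (X, Y) be jointly bivariate normal with mean zero, unit variances, and correlation ρ ∈ [0,1). For w > 0, the collision probability P_w = P(⌊X/w⌋ = ⌊Y/w⌋) satisfies P_w = 2 ∑_{i=0}^∞ ∫_{iw}^{(i+1)w} φ(z) [Φ(((i+1)w - ρz)/√(1-ρ²)) - Φ((iw - ρz)/√(1-ρ²))] dz, where φ and Φ are the standard normal pdf and cdf. -/
open MeasureTheory ProbabilityTheory Real Set
open scoped ENNReal NNReal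

/-- Standard normal density. -/
noncomputable def stdPdf (x : ℝ) : ℝ := (Real.sqrt (2 * Real.pi))⁻¹ * Real.exp (-x ^ 2 / 2)

/-- Standard normal CDF. -/
noncomputable def Phi (x : ℝ) : ℝ := ∫ t in Set.Iic x, stdPdf t

lemma stdPdf_eq : gaussianPDFReal 0 1 = stdPdf := by
  ext x
  simp [gaussianPDFReal, stdPdf]

lemma stdPdf_nonneg (x : ℝ) : 0 ≤ stdPdf x := by
  unfold stdPdf; positivity

lemma stdPdf_continuous : Continuous stdPdf := by
  unfold stdPdf; fun_prop

lemma integrable_stdPdf : Integrable stdPdf := by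
  rw [← stdPdf_eq]; exact integrable_gaussianPDFReal 0 1

lemma integral_stdPdf : ∫ x, stdPdf x = 1 := by
  rw [← stdPdf_eq]; exact integral_gaussianPDFReal_eq_one 0 one_ne_zero

lemma stdPdf_neg (x : ℝ) : stdPdf (-x) = stdPdf x := by simp [stdPdf]

lemma Phi_nonneg (x : ℝ) : 0 ≤ Phi x :=
  setIntegral_nonneg measurableSet_Iic fun t _ => stdPdf_nonneg t

lemma Phi_le_one (x : ℝ) : Phi x ≤ 1 := by
  rw [← integral_stdPdf]
  exact setIntegral_le_integral integrable_stdPdf (Filter.Eventually.of_forall stdPdf_nonneg)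

lemma Phi_sub_eq (a b : ℝ) : Phi b - Phi a = ∫ x in a..b, stdPdf x :=
  intervalIntegral.integral_Iic_sub_Iic integrable_stdPdf.integrableOn
    integrable_stdPdf.integrableOn

lemma Phi_mono {a b : ℝ} (hab : a ≤ b) : Phi a ≤ Phi b := by
  have h := Phi_sub_eq a b
  have h2 : 0 ≤ ∫ x in a..b, stdPdf x :=
    intervalIntegral.integral_nonneg hab fun x _ => stdPdf_nonneg x
  linarith

lemma Phi_neg (x : ℝ) : Phi (-x) = 1 - Phi x := by
  have h1 : Phi (-x) = ∫ t in Ioi x, stdPdf t := by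
    rw [Phi]
    calc ∫ t in Iic (-x), stdPdf t = ∫ t in Iic (-x), stdPdf (-t) := by
          simp_rw [stdPdf_neg]
      _ = ∫ t in Ioi x, stdPdf t := by rw [integral_comp_neg_Iic, neg_neg]
  have h2 : Phi x + ∫ t in Ioi x, stdPdf t = 1 := by
    rw [Phi, intervalIntegral.integral_Iic_add_Ioi integrable_stdPdf.integrableOn
      integrable_stdPdf.integrableOn, integral_stdPdf]
  linarith

lemma Phi_measurable : Measurable Phi := Monotone.measurable fun _ _ h => Phi_mono h

lemma gauss_Ico {a b : ℝ} (hab : a ≤ b) :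
    gaussianReal 0 1 (Ico a b) = ENNReal.ofReal (Phi b - Phi a) := by
  rw [gaussianReal_apply_eq_integral 0 one_ne_zero, stdPdf_eq, Phi_sub_eq,
    intervalIntegral.integral_of_le hab, integral_Ioc_eq_integral_Ioo,
    integral_Ico_eq_integral_Ioo]

/-- Collision probability of uniform quantization for a standard bivariate normal pair
with correlation ρ ∈ [0,1). -/
theorem stmt1 (ρ : ℝ) (hρ : ρ ∈ Set.Ico (0 : ℝ) 1) (w : ℝ) (hw : 0 < w) :
    (((gaussianReal 0 1).prod (gaussianReal 0 1))
        {p : ℝ × ℝ | ⌊p.1 / w⌋ = ⌊(ρ * p.1 + Real.sqrt (1 - ρ ^ 2) * p.2) / w⌋}).toReal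
      = 2 * ∑' i : ℕ, ∫ z in Set.Ioc ((i : ℝ) * w) (((i : ℝ) + 1) * w),
          stdPdf z * (Phi ((((i : ℝ) + 1) * w - ρ * z) / Real.sqrt (1 - ρ ^ 2))
            - Phi (((i : ℝ) * w - ρ * z) / Real.sqrt (1 - ρ ^ 2))) := by
  obtain ⟨hρ0, hρ1⟩ := hρ
  set s : ℝ := Real.sqrt (1 - ρ ^ 2) with hs_def
  have hs : 0 < s := Real.sqrt_pos.mpr (by nlinarith)
  set μ : Measure ℝ := gaussianReal 0 1 with hμ_def
  set A : Set (ℝ × ℝ) := {p : ℝ × ℝ | ⌊p.1 / w⌋ = ⌊(ρ * p.1 + s * p.2) / w⌋} with hA_def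
  set g : ℝ → ℝ := fun x =>
    Phi ((((⌊x / w⌋ : ℝ) + 1) * w - ρ * x) / s) - Phi (((⌊x / w⌋ : ℝ) * w - ρ * x) / s)
    with hg_def
  set U : ℝ → ℝ := fun a => ∫ x in a * w..(a + 1) * w,
    stdPdf x * (Phi (((a + 1) * w - ρ * x) / s) - Phi ((a * w - ρ * x) / s)) with hU_def
  -- measurability of A
  have hA : MeasurableSet A := by
    apply measurableSet_eq_fun
    · exact (measurable_fst.div_const w).floor
    · exact (((measurable_fst.const_mul ρ).add (measurable_snd.const_mul s)).div_const w).floor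
  -- slices
  have hslice : ∀ x : ℝ, Prod.mk x ⁻¹' A =
      Ico (((⌊x / w⌋ : ℝ) * w - ρ * x) / s) ((((⌊x / w⌋ : ℝ) + 1) * w - ρ * x) / s) := by
    intro x
    ext y
    simp only [hA_def, mem_preimage, mem_setOf_eq, mem_Ico]
    rw [eq_comm, Int.floor_eq_iff, le_div_iff₀ hw, div_lt_iff₀ hw,
      div_le_iff₀ hs, lt_div_iff₀ hs]
    constructor <;> rintro ⟨h1, h2⟩ <;> exact ⟨by linarith, by linarith⟩
  -- slice measures
  have hμslice : ∀ x : ℝ, μ (Prod.mk x ⁻¹' A) = ENNReal.ofReal (g x) := by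
    intro x
    rw [hslice x, hμ_def, gauss_Ico (by gcongr; linarith)]
  -- g is between 0 and 1
  have hg01 : ∀ x : ℝ, 0 ≤ g x ∧ g x ≤ 1 := by
    intro x
    constructor
    · exact sub_nonneg.mpr (Phi_mono (by gcongr; linarith))
    · have h1 := Phi_le_one ((((⌊x / w⌋ : ℝ) + 1) * w - ρ * x) / s)
      have h2 := Phi_nonneg (((⌊x / w⌋ : ℝ) * w - ρ * x) / s)
      simp only [hg_def]; linarith
  -- g is measurable
  have hfm : Measurable fun x : ℝ => ((⌊x / w⌋ : ℤ) : ℝ) :=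
    measurable_from_top.comp (measurable_id.div_const w).floor
  have hg_meas : Measurable g := by
    apply Measurable.sub
    · exact Phi_measurable.comp
        ((((hfm.add_const 1).mul_const w).sub (measurable_id.const_mul ρ)).div_const s)
    · exact Phi_measurable.comp
        (((hfm.mul_const w).sub (measurable_id.const_mul ρ)).div_const s)
  -- g is integrable w.r.t. μ
  have hg_int : Integrable g μ := by
    refine Integrable.mono' (integrable_const 1) hg_meas.aestronglyMeasurable
      (Filter.Eventually.of_forall fun x => ?_)
    rw [Real.norm_eq_abs, abs_of_nonneg (hg01 x).1]
    exact (hg01 x).2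
  -- LHS equals ∫ g dμ
  have hLHS : ((μ.prod μ) A).toReal = ∫ x, g x ∂μ := by
    rw [Measure.prod_apply hA]
    rw [lintegral_congr hμslice]
    rw [integral_eq_lintegral_of_nonneg_ae (Filter.Eventually.of_forall fun x => (hg01 x).1)
      hg_meas.aestronglyMeasurable]
  -- bins
  set B : ℤ → Set ℝ := fun i => Ico ((i : ℝ) * w) (((i : ℝ) + 1) * w) with hB_def
  have hBmeas : ∀ i : ℤ, MeasurableSet (B i) := fun i => measurableSet_Ico
  have hBdisj : Pairwise (Function.onFun Disjoint B) := by
    intro i j hij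
    simp only [Function.onFun, hB_def]
    rw [Set.Ico_disjoint_Ico]
    rcases hij.lt_or_gt with h | h
    · have h' : (i : ℝ) + 1 ≤ (j : ℝ) := by exact_mod_cast h
      refine le_trans (min_le_left _ _) (le_trans ?_ (le_max_right _ _))
      nlinarith
    · have h' : (j : ℝ) + 1 ≤ (i : ℝ) := by exact_mod_cast h
      refine le_trans (min_le_right _ _) (le_trans ?_ (le_max_left _ _))
      nlinarith
  have hBunion : (⋃ i : ℤ, B i) = univ := by
    ext x
    simp only [hB_def, mem_iUnion, mem_Ico, mem_univ, iff_true]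
    refine ⟨⌊x / w⌋, ?_, ?_⟩
    · have h := Int.floor_le (x / w)
      calc (⌊x / w⌋ : ℝ) * w ≤ (x / w) * w := by nlinarith
        _ = x := div_mul_cancel₀ x hw.ne'
    · have h := Int.lt_floor_add_one (x / w)
      calc x = (x / w) * w := (div_mul_cancel₀ x hw.ne').symm
        _ < ((⌊x / w⌋ : ℝ) + 1) * w := by nlinarith
  -- sum over bins
  have hHasSum : HasSum (fun i : ℤ => ∫ x in B i, g x ∂μ) (∫ x, g x ∂μ) := by
    have h := hasSum_integral_iUnion hBmeas hBdisj
      (by rw [hBunion]; exact hg_int.integrableOn)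
    rwa [hBunion, Measure.restrict_univ] at h
  -- per-bin value
  have hfloor : ∀ (i : ℤ) (x : ℝ), x ∈ B i → ⌊x / w⌋ = i := by
    intro i x hx
    simp only [hB_def, mem_Ico] at hx
    rw [Int.floor_eq_iff]
    constructor
    · rw [le_div_iff₀ hw]; exact hx.1
    · rw [div_lt_iff₀ hw]; exact hx.2
  have hdens : μ = (volume : Measure ℝ).withDensity (fun x => ((stdPdf x).toNNReal : ℝ≥0∞)) := by
    rw [hμ_def, gaussianReal_of_var_ne_zero 0 one_ne_zero]
    congr 1
    ext x
    rw [gaussianPDF, stdPdf_eq]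
    rfl
  have hbin : ∀ i : ℤ, ∫ x in B i, g x ∂μ = U (i : ℝ) := by
    intro i
    have hle : (i : ℝ) * w ≤ ((i : ℝ) + 1) * w := by nlinarith
    calc ∫ x in B i, g x ∂μ
        = ∫ x in B i, stdPdf x * (Phi ((((i : ℝ) + 1) * w - ρ * x) / s)
            - Phi (((i : ℝ) * w - ρ * x) / s)) := by
          rw [show (∫ x in B i, g x ∂μ) = ∫ x in B i, (Phi ((((i : ℝ) + 1) * w - ρ * x) / s)
              - Phi (((i : ℝ) * w - ρ * x) / s)) ∂μ from
            setIntegral_congr_fun (hBmeas i) fun x hx => by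
              simp only [hg_def]; rw [hfloor i x hx]]
          rw [hdens, setIntegral_withDensity_eq_setIntegral_smul
            (stdPdf_continuous.measurable.real_toNNReal) _ (hBmeas i)]
          refine setIntegral_congr_fun (hBmeas i) fun x _ => ?_
          rw [NNReal.smul_def, Real.coe_toNNReal _ (stdPdf_nonneg x), smul_eq_mul]
      _ = U (i : ℝ) := by
          rw [hU_def]
          simp only [hB_def]
          rw [intervalIntegral.integral_of_le hle, integral_Ioc_eq_integral_Ioo,
            integral_Ico_eq_integral_Ioo]
  -- symmetry
  set V : ℝ → ℝ → ℝ := fun c d => ∫ x in c..d,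
    stdPdf x * (Phi ((d - ρ * x) / s) - Phi ((c - ρ * x) / s)) with hV_def
  have hVsym : ∀ c d : ℝ, V (-d) (-c) = V c d := by
    intro c d
    have h3 : ∀ x : ℝ, stdPdf (-x) * (Phi ((-c - ρ * (-x)) / s) - Phi ((-d - ρ * (-x)) / s))
        = stdPdf x * (Phi ((d - ρ * x) / s) - Phi ((c - ρ * x) / s)) := by
      intro x
      rw [stdPdf_neg, show -c - ρ * (-x) = -(c - ρ * x) by ring,
        show -d - ρ * (-x) = -(d - ρ * x) by ring, neg_div, neg_div, Phi_neg, Phi_neg]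
      ring
    have h2 := intervalIntegral.integral_comp_neg (a := c) (b := d)
      (fun x => stdPdf x * (Phi ((-c - ρ * x) / s) - Phi ((-d - ρ * x) / s)))
    rw [hV_def]
    simp only
    rw [← h2]
    exact intervalIntegral.integral_congr fun x _ => h3 x
  have hUV : ∀ a : ℝ, U a = V (a * w) ((a + 1) * w) := fun a => rfl
  have hUsym : ∀ a : ℝ, U (-(a + 1)) = U a := by
    intro a
    rw [hUV, hUV]
    rw [show -(a + 1) * w = -((a + 1) * w) by ring,
      show (-(a + 1) + 1) * w = -(a * w) by ring, hVsym]
  -- conclude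
  have hTsum : HasSum (fun i : ℤ => U (i : ℝ)) (∫ x, g x ∂μ) := by
    have h := hHasSum
    simp only [hbin] at h
    exact h
  have hnat : Summable fun n : ℕ => U ((n : ℤ) : ℝ) :=
    hTsum.summable.comp_injective (fun a b h => by exact_mod_cast h)
  have hneg : Summable fun n : ℕ => U ((-((n : ℤ) + 1) : ℤ) : ℝ) :=
    hTsum.summable.comp_injective
      (fun a b h => by simp only at h; omega : Function.Injective fun n : ℕ => (-((n : ℤ) + 1) : ℤ))
  have hsplit : (∑' i : ℤ, U (i : ℝ))
      = (∑' n : ℕ, U ((n : ℤ) : ℝ)) + ∑' n : ℕ, U ((-((n : ℤ) + 1) : ℤ) : ℝ) :=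
    tsum_of_nat_of_neg_add_one hnat hneg
  have hcast1 : ∀ n : ℕ, U (((n : ℤ)) : ℝ) = U (n : ℝ) := fun n => by norm_num
  have hcast2 : ∀ n : ℕ, U ((-((n : ℤ) + 1) : ℤ) : ℝ) = U (n : ℝ) := fun n => by
    rw [show ((-((n : ℤ) + 1) : ℤ) : ℝ) = -((n : ℝ) + 1) by push_cast; ring, hUsym]
  have hS : ∀ n : ℕ, (∫ z in Set.Ioc ((n : ℝ) * w) (((n : ℝ) + 1) * w),
      stdPdf z * (Phi ((((n : ℝ) + 1) * w - ρ * z) / s) - Phi (((n : ℝ) * w - ρ * z) / s)))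
      = U (n : ℝ) := by
    intro n
    rw [hU_def]
    simp only
    rw [intervalIntegral.integral_of_le (by nlinarith : (n : ℝ) * w ≤ ((n : ℝ) + 1) * w)]
  rw [hLHS, ← hTsum.tsum_eq, hsplit]
  simp_rw [hcast1, hcast2, hS]
  rw [two_mul]
end

section
/- Let d > 0 and w > 0, and let T be a random variable distributed as |√d · Z| where Z is standard normal. Let Q ~ Uniform(0, w) be independent of T. Then P(⌊(X+Q)/w⌋ = ⌊(Y+Q)/w⌋), where X - Y = √d Z, equals ∫_0^w (2/√d) φ(t/√d) (1 - t/w) dt, where φ is the standard normal density. -/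
open MeasureTheory ProbabilityTheory Real Set

lemma ind_int {w : ℝ} (hw : 0 ≤ w) {A : Set ℝ} (hA : MeasurableSet A) :
    ∫ q in (0:ℝ)..w, A.indicator (1 : ℝ → ℝ) q = (volume (A ∩ Ioc 0 w)).toReal := by
  rw [intervalIntegral.integral_of_le hw, ← integral_indicator measurableSet_Ioc,
    Set.indicator_indicator, Set.inter_comm, integral_indicator_one (hA.inter measurableSet_Ioc), measureReal_def]

lemma key1 {w : ℝ} (hw : 0 < w) (x s : ℝ) (hs : 0 ≤ s) (hsw : s < w) :
    volume ({q : ℝ | ⌊(x + s + q)/w⌋ = ⌊(x + q)/w⌋} ∩ Ioc 0 w) = ENNReal.ofReal (w - s) := by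
  set A : Set ℝ := {q : ℝ | ⌊(x + s + q)/w⌋ = ⌊(x + q)/w⌋} with hAdef
  have hmf : ∀ c : ℝ, Measurable fun q : ℝ => ⌊(c + q)/w⌋ := fun c =>
    ((measurable_id.const_add c).div_const w).floor
  have hA : MeasurableSet A := measurableSet_eq_fun (hmf (x+s)) (hmf x)
  set B : Set ℝ := {r : ℝ | ⌊(s + r)/w⌋ = ⌊r/w⌋} with hBdef
  have hB : MeasurableSet B := by
    have : Measurable fun r : ℝ => ⌊r/w⌋ := (measurable_id.div_const w).floor
    exact measurableSet_eq_fun (hmf s) this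
  have hmemshift : ∀ c q : ℝ, ⌊(c + (q + w))/w⌋ = ⌊(c + q)/w⌋ + 1 := by
    intro c q
    have : (c + (q + w))/w = (c + q)/w + 1 := by field_simp; ring
    rw [this, Int.floor_add_one]
  have hper : Function.Periodic (A.indicator (1 : ℝ → ℝ)) w := by
    intro q
    have : q + w ∈ A ↔ q ∈ A := by
      simp only [hAdef, mem_setOf_eq, hmemshift]
      omega
    simp only [Set.indicator_apply]
    exact if_congr this (Pi.one_apply _) rfl
  -- the B-set measure
  have hBIoc : volume (B ∩ Ioc 0 w) = ENNReal.ofReal (w - s) := by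
    have hsub1 : Ioo 0 (w - s) ⊆ B ∩ Ioc 0 w := by
      rintro r ⟨hr0, hrws⟩
      have hrw : r < w := lt_of_lt_of_le hrws (by linarith)
      refine ⟨?_, hr0, hrw.le⟩
      have h1 : ⌊r/w⌋ = 0 := by
        rw [Int.floor_eq_zero_iff]
        exact ⟨div_nonneg hr0.le hw.le, (div_lt_one hw).2 hrw⟩
      have h2 : ⌊(s + r)/w⌋ = 0 := by
        rw [Int.floor_eq_zero_iff]
        exact ⟨div_nonneg (by linarith) hw.le, (div_lt_one hw).2 (by linarith)⟩
      simp [hBdef, h1, h2]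
    have hsub2 : B ∩ Ioc 0 w ⊆ Ioo 0 (w - s) ∪ {w} := by
      rintro r ⟨hrB, hr0, hrw⟩
      rcases eq_or_lt_of_le hrw with h | h
      · exact Or.inr (by simp [h])
      · left
        have h1 : ⌊r/w⌋ = 0 := by
          rw [Int.floor_eq_zero_iff]
          exact ⟨div_nonneg hr0.le hw.le, (div_lt_one hw).2 h⟩
        have h2 : ⌊(s + r)/w⌋ = 0 := by rw [hBdef] at hrB; rw [hrB, h1]
        have := (Int.floor_eq_zero_iff.1 h2).2
        have : s + r < w := (div_lt_one hw).1 this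
        exact ⟨hr0, by linarith⟩
    refine le_antisymm ?_ ?_
    · calc volume (B ∩ Ioc 0 w) ≤ volume (Ioo 0 (w - s) ∪ {w}) := measure_mono hsub2
        _ ≤ volume (Ioo 0 (w - s)) + volume {w} := measure_union_le _ _
        _ = ENNReal.ofReal (w - s) := by simp [Real.volume_Ioo]
    · calc ENNReal.ofReal (w - s) = volume (Ioo 0 (w - s)) := by simp [Real.volume_Ioo]
        _ ≤ volume (B ∩ Ioc 0 w) := measure_mono hsub1
  -- transfer via periodic interval integral
  have hint : ∫ q in (0:ℝ)..w, A.indicator (1 : ℝ → ℝ) q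
      = ∫ r in (0:ℝ)..w, B.indicator (1 : ℝ → ℝ) r := by
    have h1 := hper.intervalIntegral_add_eq 0 (-x)
    rw [zero_add] at h1
    have h2 : ∫ r in (0:ℝ)..w, A.indicator (1 : ℝ → ℝ) (r + -x)
        = ∫ q in (-x)..(-x + w), A.indicator (1 : ℝ → ℝ) q := by
      rw [intervalIntegral.integral_comp_add_right _ (-x)]
      norm_num [add_comm]
    have h3 : ∀ r : ℝ, A.indicator (1 : ℝ → ℝ) (r + -x)
        = B.indicator (1 : ℝ → ℝ) r := by
      intro r
      have : r + -x ∈ A ↔ r ∈ B := by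
        simp only [hAdef, hBdef, mem_setOf_eq]
        have e1 : x + s + (r + -x) = s + r := by ring
        have e2 : x + (r + -x) = r := by ring
        rw [e1, e2]
      simp only [Set.indicator_apply]
      exact if_congr this (Pi.one_apply _) rfl
    rw [h1, ← h2]
    exact intervalIntegral.integral_congr fun r _ => h3 r
  have hAI := ind_int hw.le hA
  have hBI := ind_int hw.le hB
  have htr : (volume (A ∩ Ioc 0 w)).toReal = w - s := by
    rw [← hAI, hint, hBI, hBIoc, ENNReal.toReal_ofReal (by linarith)]
  have hfin : volume (A ∩ Ioc 0 w) ≠ ⊤ := by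
    refine ne_top_of_le_ne_top ?_ (measure_mono Set.inter_subset_right)
    simp [Real.volume_Ioc]
  rw [← ENNReal.ofReal_toReal hfin, htr]

lemma key2 {w : ℝ} (hw : 0 < w) (x s : ℝ) :
    volume ({q : ℝ | ⌊(x + s + q)/w⌋ = ⌊(x + q)/w⌋} ∩ Ioo 0 w)
      = ENNReal.ofReal (w - min |s| w) := by
  set A : Set ℝ := {q : ℝ | ⌊(x + s + q)/w⌋ = ⌊(x + q)/w⌋} with hAdef
  have hooc : volume (A ∩ Ioo 0 w) = volume (A ∩ Ioc 0 w) := by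
    refine le_antisymm (measure_mono (inter_subset_inter_right _ Ioo_subset_Ioc_self)) ?_
    have hsub : A ∩ Ioc 0 w ⊆ (A ∩ Ioo 0 w) ∪ {w} := by
      rintro r ⟨hrA, hr0, hrw⟩
      rcases eq_or_lt_of_le hrw with h | h
      · exact Or.inr (by simp [h])
      · exact Or.inl ⟨hrA, hr0, h⟩
    calc volume (A ∩ Ioc 0 w) ≤ volume ((A ∩ Ioo 0 w) ∪ {w}) := measure_mono hsub
      _ ≤ volume (A ∩ Ioo 0 w) + volume {w} := measure_union_le _ _
      _ = volume (A ∩ Ioo 0 w) := by simp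
  rw [hooc]
  rcases lt_or_ge |s| w with hlt | hge
  · rw [min_eq_left hlt.le]
    rcases le_or_gt 0 s with hs | hs
    · rw [abs_of_nonneg hs] at hlt ⊢
      exact key1 hw x s hs hlt
    · rw [abs_of_neg hs] at hlt ⊢
      have hset : A = {q : ℝ | ⌊((x + s) + (-s) + q)/w⌋ = ⌊((x + s) + q)/w⌋} := by
        ext q
        simp only [hAdef, mem_setOf_eq]
        rw [show (x + s) + (-s) + q = x + q by ring]
        exact eq_comm
      rw [hset]
      exact key1 hw (x + s) (-s) (by linarith) hlt
  · rw [min_eq_right hge, sub_self, ENNReal.ofReal_zero]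
    have hempty : A = ∅ := by
      ext q
      simp only [hAdef, mem_setOf_eq, mem_empty_iff_false, iff_false]
      rcases le_or_gt 0 s with hs | hs
      · have hsw : w ≤ s := by rwa [abs_of_nonneg hs] at hge
        have h1 : (x + q)/w + 1 ≤ (x + s + q)/w := by
          rw [show (x + q)/w + 1 = (x + q + w)/w by field_simp]
          exact (div_le_div_iff_of_pos_right hw).2 (by linarith)
        have h2 := Int.floor_mono h1
        rw [Int.floor_add_one] at h2
        omega
      · have hsw : s ≤ -w := by
          have := abs_of_neg hs
          rw [abs_of_neg hs] at hge; linarith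
        have h1 : (x + s + q)/w + 1 ≤ (x + q)/w := by
          rw [show (x + s + q)/w + 1 = (x + s + q + w)/w by field_simp]
          exact (div_le_div_iff_of_pos_right hw).2 (by linarith)
        have h2 := Int.floor_mono h1
        rw [Int.floor_add_one] at h2
        omega
    rw [hempty, empty_inter, measure_empty]

/-- Collision probability of quantization with a uniform random offset, for two points
whose difference is √d Z with Z standard normal. -/
theorem stmt3 (d w : ℝ) (hd : 0 < d) (hw : 0 < w) (y₀ : ℝ) :
    (((gaussianReal 0 1).prod
        ((ENNReal.ofReal w)⁻¹ • volume.restrict (Set.Ioo (0 : ℝ) w)))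
        {p : ℝ × ℝ | ⌊(y₀ + Real.sqrt d * p.1 + p.2) / w⌋ = ⌊(y₀ + p.2) / w⌋}).toReal
      = ∫ t in Set.Ioc (0 : ℝ) w,
          (2 / Real.sqrt d) * stdPdf (t / Real.sqrt d) * (1 - t / w) := by
  have hsd : (0:ℝ) < Real.sqrt d := Real.sqrt_pos.2 hd
  have hS : MeasurableSet {p : ℝ × ℝ | ⌊(y₀ + Real.sqrt d * p.1 + p.2) / w⌋ = ⌊(y₀ + p.2) / w⌋} := by
    apply measurableSet_eq_fun
    · exact ((((measurable_fst.const_mul (Real.sqrt d)).const_add y₀).add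
        measurable_snd).div_const w).floor
    · exact ((measurable_snd.const_add y₀).div_const w).floor
  set g : ℝ → ℝ := fun z => (w - min (Real.sqrt d * |z|) w) / w with hgdef
  have hgm : Measurable g :=
    (measurable_const.sub ((measurable_abs.const_mul _).min measurable_const)).div_const w
  have hgnn : ∀ z, 0 ≤ g z := fun z =>
    div_nonneg (by simp [sub_nonneg, min_le_right]) hw.le
  have hslice : ∀ z : ℝ,
      ((ENNReal.ofReal w)⁻¹ • volume.restrict (Set.Ioo (0 : ℝ) w))
        (Prod.mk z ⁻¹' {p : ℝ × ℝ | ⌊(y₀ + Real.sqrt d * p.1 + p.2) / w⌋ = ⌊(y₀ + p.2) / w⌋})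
      = ENNReal.ofReal (g z) := by
    intro z
    have hpre : Prod.mk z ⁻¹' {p : ℝ × ℝ | ⌊(y₀ + Real.sqrt d * p.1 + p.2) / w⌋ = ⌊(y₀ + p.2) / w⌋}
        = {q : ℝ | ⌊(y₀ + Real.sqrt d * z + q)/w⌋ = ⌊(y₀ + q)/w⌋} := rfl
    rw [Measure.smul_apply, hpre, Measure.restrict_apply' measurableSet_Ioo, smul_eq_mul,
      key2 hw y₀ (Real.sqrt d * z), abs_mul, abs_of_nonneg hsd.le, hgdef,
      ENNReal.ofReal_div_of_pos hw, div_eq_mul_inv, mul_comm]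
  rw [Measure.prod_apply hS, lintegral_congr hslice,
    gaussianReal_of_var_ne_zero 0 one_ne_zero,
    lintegral_withDensity_eq_lintegral_mul _ (measurable_gaussianPDF 0 1) hgm.ennreal_ofReal]
  have hpdf : ∀ z, gaussianPDFReal 0 1 z = stdPdf z := by
    intro z
    simp [gaussianPDFReal, stdPdf]
  have hmul : ∀ z, (gaussianPDF 0 1 * fun z => ENNReal.ofReal (g z)) z
      = ENNReal.ofReal (stdPdf z * g z) := by
    intro z
    simp only [Pi.mul_apply, gaussianPDF_def]
    rw [← ENNReal.ofReal_mul (gaussianPDFReal_nonneg 0 1 z), hpdf]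
  rw [lintegral_congr hmul]
  have hstdnn : ∀ t, 0 ≤ stdPdf t := fun t =>
    mul_nonneg (inv_nonneg.2 (Real.sqrt_nonneg _)) (Real.exp_nonneg _)
  have hstm : Measurable stdPdf :=
    (measurable_const.mul ((((measurable_id.pow_const 2).neg).div_const 2).exp))
  rw [← integral_eq_lintegral_of_nonneg_ae
    (Filter.Eventually.of_forall fun z => mul_nonneg (hstdnn z) (hgnn z))
    ((hstm.mul hgm).aestronglyMeasurable)]
  -- now a real integral computation
  set F : ℝ → ℝ := fun t => stdPdf t * ((w - min (Real.sqrt d * t) w) / w) with hFdef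
  have habs : ∀ z : ℝ, stdPdf z * g z = F |z| := by
    intro z
    have : stdPdf |z| = stdPdf z := by simp [stdPdf, sq_abs]
    rw [hFdef]
    simp only [this, hgdef]
  calc (∫ z, stdPdf z * g z)
      = ∫ z, F |z| := by simp only [habs]
    _ = 2 * ∫ t in Ioi (0:ℝ), F t := integral_comp_abs
    _ = 2 * ((Real.sqrt d)⁻¹ * ∫ u in Ioi (0:ℝ), F ((Real.sqrt d)⁻¹ * u)) := by
        have hcv := integral_comp_mul_left_Ioi F 0 (inv_pos.2 hsd)
        rw [mul_zero, inv_inv, smul_eq_mul] at hcv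
        rw [hcv, inv_mul_cancel_left₀ hsd.ne']
    _ = 2 * ((Real.sqrt d)⁻¹ * ∫ u in Ioc (0:ℝ) w, stdPdf (u / Real.sqrt d) * ((w - min u w)/w)) := by
        congr 1
        congr 1
        have hFu : ∀ u : ℝ, F ((Real.sqrt d)⁻¹ * u)
            = stdPdf (u / Real.sqrt d) * ((w - min u w)/w) := by
          intro u
          rw [hFdef]
          simp only
          rw [show Real.sqrt d * ((Real.sqrt d)⁻¹ * u) = u by field_simp,
            inv_mul_eq_div]
        simp only [hFu]
        set H : ℝ → ℝ := fun u => stdPdf (u / Real.sqrt d) * ((w - min u w)/w) with hHdef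
        have hind : ∀ u ∈ Ioi (0:ℝ), H u = (Ioc 0 w).indicator H u := by
          intro u hu
          rcases le_or_gt u w with h | h
          · rw [Set.indicator_of_mem (show u ∈ Ioc 0 w from ⟨mem_Ioi.1 hu, h⟩)]
          · rw [Set.indicator_of_notMem (fun hmem => absurd hmem.2 h.not_ge)]
            rw [hHdef]
            simp only
            rw [min_eq_right h.le]
            simp
        rw [setIntegral_congr_fun measurableSet_Ioi hind,
          integral_indicator measurableSet_Ioc,
          Measure.restrict_restrict measurableSet_Ioc,
          inter_eq_self_of_subset_left Ioc_subset_Ioi_self]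
    _ = ∫ t in Set.Ioc (0 : ℝ) w, (2 / Real.sqrt d) * stdPdf (t / Real.sqrt d) * (1 - t / w) := by
        have hcong : ∀ t ∈ Ioc (0:ℝ) w,
            (2 / Real.sqrt d) * stdPdf (t / Real.sqrt d) * (1 - t / w)
            = (2 / Real.sqrt d) * (stdPdf (t / Real.sqrt d) * ((w - min t w)/w)) := by
          intro t ht
          rw [min_eq_left ht.2, sub_div, div_self hw.ne']
          ring
        rw [setIntegral_congr_fun measurableSet_Ioc hcong, integral_const_mul]
        ring
end

section
/- Let (X, Y) be bivariate normal with mean zero, unit variances, and correlation ρ, where 0 ≤ ρ < 1. For any fixed w > 0, the collision probability P_w(ρ) = P(⌊X/w⌋ = ⌊Y/w⌋) is a monotonically increasing function of ρ on [0, 1), and P_w(ρ) → 1 as ρ → 1⁻. -/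
open MeasureTheory ProbabilityTheory Real Set Filter
open scoped Classical ENNReal

namespace Stmt11Aux


lemma shear1 (t : ℝ) :
    MeasurePreserving (fun p : ℝ × ℝ => (p.1 + t * p.2, p.2))
      ((volume : Measure ℝ).prod volume) ((volume : Measure ℝ).prod volume) := by
  have hm : Measurable (fun p : ℝ × ℝ => (p.1 + t * p.2, p.2)) := by fun_prop
  refine ⟨hm, ?_⟩
  refine (Measure.prod_eq fun A B hA hB => ?_).symm
  rw [Measure.map_apply hm (hA.prod hB)]
  have hpre : (fun p : ℝ × ℝ => (p.1 + t * p.2, p.2)) ⁻¹' (A ×ˢ B)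
      = {p : ℝ × ℝ | p.1 + t * p.2 ∈ A ∧ p.2 ∈ B} := rfl
  rw [hpre]
  have hms : MeasurableSet {p : ℝ × ℝ | p.1 + t * p.2 ∈ A ∧ p.2 ∈ B} := by
    exact (hA.preimage (by fun_prop)).inter (hB.preimage measurable_snd)
  rw [Measure.prod_apply_symm hms]
  have hsec : ∀ y : ℝ, ((fun x => (x, y)) ⁻¹' {p : ℝ × ℝ | p.1 + t * p.2 ∈ A ∧ p.2 ∈ B})
      = if y ∈ B then (fun x => x + t * y) ⁻¹' A else ∅ := by
    intro y
    by_cases hy : y ∈ B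
    · simp only [hy, if_true]
      ext x
      simp [hy]
    · simp only [hy, if_false]
      ext x
      simp [hy]
  have : ∀ y : ℝ, volume ((fun x => (x, y)) ⁻¹' {p : ℝ × ℝ | p.1 + t * p.2 ∈ A ∧ p.2 ∈ B})
      = B.indicator (fun _ => volume A) y := by
    intro y
    rw [hsec y]
    by_cases hy : y ∈ B
    · simp only [hy, if_true, Set.indicator_of_mem]
      exact (measurePreserving_add_right volume (t * y)).measure_preimage hA.nullMeasurableSet
    · simp [hy]
  simp_rw [this]
  rw [lintegral_indicator hB, setLIntegral_const]

lemma shear2 (t : ℝ) :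
    MeasurePreserving (fun p : ℝ × ℝ => (p.1, p.2 + t * p.1))
      ((volume : Measure ℝ).prod volume) ((volume : Measure ℝ).prod volume) := by
  exact Measure.measurePreserving_swap.comp ((shear1 t).comp Measure.measurePreserving_swap)

lemma rot_vol {c s : ℝ} (hcs : c ^ 2 + s ^ 2 = 1) (hs : s ≠ 0) :
    MeasurePreserving (fun p : ℝ × ℝ => (c * p.1 + s * p.2, -s * p.1 + c * p.2))
      ((volume : Measure ℝ).prod volume) ((volume : Measure ℝ).prod volume) := by
  set t : ℝ := (1 - c) / s with ht
  have hts : t * s = 1 - c := div_mul_cancel₀ _ hs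
  have key : (fun p : ℝ × ℝ => (c * p.1 + s * p.2, -s * p.1 + c * p.2))
      = (fun p : ℝ × ℝ => (p.1 + t * p.2, p.2)) ∘
        ((fun p : ℝ × ℝ => (p.1, p.2 + (-s) * p.1)) ∘ (fun p : ℝ × ℝ => (p.1 + t * p.2, p.2))) := by
    funext p
    simp only [Function.comp_apply]
    have h3 : t * (1 + c) = s := by
      rw [ht, div_mul_eq_mul_div, div_eq_iff hs]
      linear_combination -hcs
    have h2 : 2 * t - t ^ 2 * s = s := by linear_combination (-t) * hts + h3
    refine Prod.ext ?_ ?_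
    · simp only
      linear_combination p.1 * hts - p.2 * h2
    · simp only
      linear_combination p.2 * hts
  rw [key]
  exact (shear1 t).comp ((shear2 (-s)).comp (shear1 t))





noncomputable def gDen : ℝ × ℝ → ℝ≥0∞ := fun p => gaussianPDF 0 1 p.1 * gaussianPDF 0 1 p.2

lemma gDen_eq {a b a' b' : ℝ} (h : a ^ 2 + b ^ 2 = a' ^ 2 + b' ^ 2) :
    gDen (a, b) = gDen (a', b') := by
  have key : ∀ x y : ℝ, gaussianPDF 0 1 x * gaussianPDF 0 1 y
      = ENNReal.ofReal ((Real.sqrt (2 * π))⁻¹ ^ 2 * Real.exp (-(x ^ 2 + y ^ 2) / 2)) := by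
    intro x y
    simp only [gaussianPDF_def]
    rw [← ENNReal.ofReal_mul (gaussianPDFReal_nonneg _ _ _)]
    congr 1
    simp only [gaussianPDFReal, NNReal.coe_one, mul_one, sub_zero]
    rw [show -(x ^ 2 + y ^ 2) / 2 = -x ^ 2 / 2 + -y ^ 2 / 2 by ring, Real.exp_add]
    ring
  simp only [gDen]
  rw [key, key, h]

lemma gDen_measurable : Measurable gDen :=
  ((measurable_gaussianPDF 0 1).comp measurable_fst).mul
    ((measurable_gaussianPDF 0 1).comp measurable_snd)

lemma prodGauss :
    (gaussianReal 0 1).prod (gaussianReal 0 1)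
      = ((volume : Measure ℝ).prod volume).withDensity gDen := by
  refine Measure.prod_eq fun A B hA hB => ?_
  rw [withDensity_apply _ (hA.prod hB), ← Measure.prod_restrict]
  simp only [gDen]
  rw [lintegral_prod_mul ((measurable_gaussianPDF 0 1).aemeasurable)
      ((measurable_gaussianPDF 0 1).aemeasurable),
    gaussianReal_apply _ one_ne_zero A, gaussianReal_apply _ one_ne_zero B]

lemma map_withDensity {α β : Type*} [MeasurableSpace α] [MeasurableSpace β]
    (e : α ≃ᵐ β) (ν : Measure α) {f : α → ℝ≥0∞} (hf : Measurable f) :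
    (ν.withDensity f).map e = (ν.map e).withDensity (f ∘ e.symm) := by
  ext s hs
  rw [Measure.map_apply e.measurable hs, withDensity_apply _ (e.measurable hs),
    withDensity_apply _ hs,
    setLIntegral_map hs (hf.comp e.symm.measurable) e.measurable]
  refine setLIntegral_congr_fun (e.measurable hs) (fun x _ => ?_)
  simp

/-- Rotation as a measurable equiv, for `c^2 + s^2 = 1`. -/
noncomputable def rotEquiv (c s : ℝ) (hcs : c ^ 2 + s ^ 2 = 1) : (ℝ × ℝ) ≃ᵐ (ℝ × ℝ) where
  toFun := fun p => (c * p.1 + s * p.2, -s * p.1 + c * p.2)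
  invFun := fun p => (c * p.1 - s * p.2, s * p.1 + c * p.2)
  left_inv := by
    intro p
    refine Prod.ext ?_ ?_ <;> simp only
    · linear_combination p.1 * hcs
    · linear_combination p.2 * hcs
  right_inv := by
    intro p
    refine Prod.ext ?_ ?_ <;> simp only
    · linear_combination p.1 * hcs
    · linear_combination p.2 * hcs
  measurable_toFun :=
    (show Measurable (fun p : ℝ × ℝ => (c * p.1 + s * p.2, -s * p.1 + c * p.2)) by fun_prop)
  measurable_invFun :=
    (show Measurable (fun p : ℝ × ℝ => (c * p.1 - s * p.2, s * p.1 + c * p.2)) by fun_prop)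

lemma rot_gauss {c s : ℝ} (hc : 0 ≤ c) (hs : 0 ≤ s) (hcs : c ^ 2 + s ^ 2 = 1) :
    MeasurePreserving (fun p : ℝ × ℝ => (c * p.1 + s * p.2, -s * p.1 + c * p.2))
      ((gaussianReal 0 1).prod (gaussianReal 0 1))
      ((gaussianReal 0 1).prod (gaussianReal 0 1)) := by
  rcases eq_or_lt_of_le hs with hs0 | hs0
  · have hc1 : c = 1 := by nlinarith
    have : (fun p : ℝ × ℝ => (c * p.1 + s * p.2, -s * p.1 + c * p.2)) = id := by
      funext p; simp [hc1, ← hs0]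
    rw [this]
    exact MeasurePreserving.id _
  · refine ⟨by fun_prop, ?_⟩
    have hco : ⇑(rotEquiv c s hcs) = (fun p : ℝ × ℝ => (c * p.1 + s * p.2, -s * p.1 + c * p.2)) :=
      rfl
    have hmap : Measure.map (rotEquiv c s hcs) ((volume : Measure ℝ).prod volume)
        = (volume : Measure ℝ).prod volume := by
      rw [hco]; exact (rot_vol hcs (ne_of_gt hs0)).map_eq
    rw [← hco, prodGauss, map_withDensity _ _ gDen_measurable, hmap]
    congr 1
    funext p
    have : (rotEquiv c s hcs).symm p = (c * p.1 - s * p.2, s * p.1 + c * p.2) := rfl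
    rw [Function.comp_apply, this]
    exact gDen_eq (by linear_combination (p.1 ^ 2 + p.2 ^ 2) * hcs)

/-- The law of a nonnegative unit-norm linear combination of two iid standard gaussians
is standard gaussian. -/
lemma combo_unit {c s : ℝ} (hc : 0 ≤ c) (hs : 0 ≤ s) (hcs : c ^ 2 + s ^ 2 = 1) :
    Measure.map (fun p : ℝ × ℝ => c * p.1 + s * p.2)
      ((gaussianReal 0 1).prod (gaussianReal 0 1)) = gaussianReal 0 1 := by
  have : (fun p : ℝ × ℝ => c * p.1 + s * p.2)
      = Prod.fst ∘ (fun p : ℝ × ℝ => (c * p.1 + s * p.2, -s * p.1 + c * p.2)) := rfl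
  rw [this, ← Measure.map_map measurable_fst (by fun_prop), (rot_gauss hc hs hcs).map_eq,
    Measure.map_fst_prod]
  simp

/-- General nonnegative combination. -/
lemma combo_map {a b : ℝ} (ha : 0 ≤ a) (hb : 0 < b) :
    Measure.map (fun p : ℝ × ℝ => a * p.1 + b * p.2)
      ((gaussianReal 0 1).prod (gaussianReal 0 1))
      = Measure.map (fun u : ℝ => Real.sqrt (a ^ 2 + b ^ 2) * u) (gaussianReal 0 1) := by
  set r : ℝ := Real.sqrt (a ^ 2 + b ^ 2) with hr
  have hr0 : 0 < r := Real.sqrt_pos.mpr (by positivity)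
  have hru : (a / r) ^ 2 + (b / r) ^ 2 = 1 := by
    rw [div_pow, div_pow, ← add_div, hr, Real.sq_sqrt (by positivity)]
    field_simp
  have hcomp : (fun p : ℝ × ℝ => a * p.1 + b * p.2)
      = (fun u : ℝ => r * u) ∘ (fun p : ℝ × ℝ => (a / r) * p.1 + (b / r) * p.2) := by
    funext p
    show a * p.1 + b * p.2 = r * ((a / r) * p.1 + (b / r) * p.2)
    field_simp
  rw [hcomp, ← Measure.map_map (by fun_prop) (by fun_prop),
    combo_unit (by positivity) (by positivity) hru]





section Ops


lemma integrable_of_le_one {α : Type*} [MeasurableSpace α] {ν : Measure α} [IsFiniteMeasure ν]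
    {g : α → ℝ} (hm : AEStronglyMeasurable g ν) (h0 : ∀ x, 0 ≤ g x) (h1 : ∀ x, g x ≤ 1) :
    Integrable g ν :=
  (integrable_const 1).mono' hm (ae_of_all _ fun x => by
    rw [Real.norm_eq_abs, abs_of_nonneg (h0 x)]; exact h1 x)

/-- Ornstein-Uhlenbeck operator. -/
noncomputable def Tker (a : ℝ) (f : ℝ → ℝ) (x : ℝ) : ℝ :=
  ∫ z, f (a * x + Real.sqrt (1 - a ^ 2) * z) ∂(gaussianReal 0 1)

variable {f : ℝ → ℝ} (hf : Measurable f) (h0 : ∀ x, 0 ≤ f x) (h1 : ∀ x, f x ≤ 1)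

lemma Tker_meas (a : ℝ) (hf : Measurable f) : Measurable (Tker a f) :=
  (StronglyMeasurable.integral_prod_right'
    (f := fun q : ℝ × ℝ => f (a * q.1 + Real.sqrt (1 - a ^ 2) * q.2))
    ((hf.comp (by fun_prop)).stronglyMeasurable)).measurable

include h0 in
lemma Tker_nonneg (a : ℝ) : ∀ x, 0 ≤ Tker a f x := fun x =>
  integral_nonneg fun z => h0 _

include hf h0 h1 in
lemma Tker_le_one (a : ℝ) : ∀ x, Tker a f x ≤ 1 := by
  intro x
  calc Tker a f x ≤ ∫ _, (1 : ℝ) ∂(gaussianReal 0 1) := by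
        refine integral_mono (integrable_of_le_one ((hf.comp (by fun_prop :
          Measurable fun z : ℝ => a * x + Real.sqrt (1 - a ^ 2) * z)).aestronglyMeasurable)
          (fun z => h0 _) (fun z => h1 _)) (integrable_const 1) (fun z => h1 _)
    _ = 1 := by simp

/-- Transfer of a two-variable nonnegative linear combination integral. -/
lemma int_combo {g : ℝ → ℝ} (hg : Measurable g) {a b : ℝ} (ha : 0 ≤ a) (hb : 0 < b) (C : ℝ) :
    ∫ p, g (C + (a * p.1 + b * p.2)) ∂((gaussianReal 0 1).prod (gaussianReal 0 1))
      = ∫ u, g (C + Real.sqrt (a ^ 2 + b ^ 2) * u) ∂(gaussianReal 0 1) := by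
  have hgm : Measurable (fun y : ℝ => g (C + y)) := hg.comp (by fun_prop)
  have h1 := integral_map (φ := fun p : ℝ × ℝ => a * p.1 + b * p.2)
    (μ := (gaussianReal 0 1).prod (gaussianReal 0 1)) (f := fun y : ℝ => g (C + y))
    (by fun_prop) hgm.aestronglyMeasurable
  have h2 := integral_map (φ := fun u : ℝ => Real.sqrt (a ^ 2 + b ^ 2) * u)
    (μ := gaussianReal 0 1) (f := fun y : ℝ => g (C + y))
    (by fun_prop) hgm.aestronglyMeasurable
  rw [combo_map ha hb] at h1
  exact h1.symm.trans h2

/-- Transfer for unit combinations. -/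
lemma int_combo_unit {g : ℝ → ℝ} (hg : Measurable g) {a : ℝ} (ha : 0 ≤ a) (ha1 : a < 1) :
    ∫ p, g (a * p.1 + Real.sqrt (1 - a ^ 2) * p.2) ∂((gaussianReal 0 1).prod (gaussianReal 0 1))
      = ∫ u, g u ∂(gaussianReal 0 1) := by
  have hσ : (0:ℝ) < Real.sqrt (1 - a ^ 2) := Real.sqrt_pos.mpr (by nlinarith)
  have hcs : a ^ 2 + Real.sqrt (1 - a ^ 2) ^ 2 = 1 := by
    rw [Real.sq_sqrt (by nlinarith)]; ring
  have h1 := integral_map (φ := fun p : ℝ × ℝ => a * p.1 + Real.sqrt (1 - a ^ 2) * p.2)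
    (μ := (gaussianReal 0 1).prod (gaussianReal 0 1)) (f := g)
    (by fun_prop) hg.aestronglyMeasurable
  rw [combo_unit ha hσ.le hcs] at h1
  exact h1.symm

end Ops





section Core

variable {f : ℝ → ℝ}

/-- `∫ T_a f dγ = ∫ f dγ`. -/
lemma int_Tker (hf : Measurable f) (h0 : ∀ x, 0 ≤ f x) (h1 : ∀ x, f x ≤ 1)
    {a : ℝ} (ha : 0 ≤ a) (ha1 : a < 1) :
    ∫ x, Tker a f x ∂(gaussianReal 0 1) = ∫ x, f x ∂(gaussianReal 0 1) := by
  have hint : Integrable (fun q : ℝ × ℝ => f (a * q.1 + Real.sqrt (1 - a ^ 2) * q.2))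
      ((gaussianReal 0 1).prod (gaussianReal 0 1)) :=
    integrable_of_le_one ((hf.comp (by fun_prop)).aestronglyMeasurable)
      (fun q => h0 _) (fun q => h1 _)
  have h2 := integral_integral (f := fun x z => f (a * x + Real.sqrt (1 - a ^ 2) * z)) hint
  simp only [Tker]
  rw [h2]
  exact int_combo_unit hf ha ha1

/-- Semigroup property. -/
lemma Tker_comp (hf : Measurable f) (h0 : ∀ x, 0 ≤ f x) (h1 : ∀ x, f x ≤ 1)
    {a b : ℝ} (ha0 : 0 ≤ a) (ha1 : a ≤ 1) (hb0 : 0 ≤ b) (hb1 : b < 1) (x : ℝ) :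
    Tker a (Tker b f) x = Tker (a * b) f x := by
  have h1a : (0:ℝ) ≤ 1 - a ^ 2 := by nlinarith
  have h1b : (0:ℝ) < 1 - b ^ 2 := by nlinarith
  have hσa : 0 ≤ Real.sqrt (1 - a ^ 2) := Real.sqrt_nonneg _
  have hσb : 0 < Real.sqrt (1 - b ^ 2) := Real.sqrt_pos.mpr h1b
  have harg : ∀ z w : ℝ, b * (a * x + Real.sqrt (1 - a ^ 2) * z) + Real.sqrt (1 - b ^ 2) * w
      = a * b * x + (b * Real.sqrt (1 - a ^ 2) * z + Real.sqrt (1 - b ^ 2) * w) := by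
    intro z w; ring
  have hint : Integrable (fun q : ℝ × ℝ =>
      f (a * b * x + (b * Real.sqrt (1 - a ^ 2) * q.1 + Real.sqrt (1 - b ^ 2) * q.2)))
      ((gaussianReal 0 1).prod (gaussianReal 0 1)) :=
    integrable_of_le_one ((hf.comp (by fun_prop)).aestronglyMeasurable)
      (fun q => h0 _) (fun q => h1 _)
  have hfub := integral_integral (f := fun z w =>
    f (a * b * x + (b * Real.sqrt (1 - a ^ 2) * z + Real.sqrt (1 - b ^ 2) * w))) hint
  have hkey : (b * Real.sqrt (1 - a ^ 2)) ^ 2 + Real.sqrt (1 - b ^ 2) ^ 2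
      = 1 - (a * b) ^ 2 := by
    rw [mul_pow, Real.sq_sqrt h1a, Real.sq_sqrt h1b.le]; ring
  calc Tker a (Tker b f) x
      = ∫ z, ∫ w, f (b * (a * x + Real.sqrt (1 - a ^ 2) * z) + Real.sqrt (1 - b ^ 2) * w)
          ∂(gaussianReal 0 1) ∂(gaussianReal 0 1) := rfl
    _ = ∫ z, ∫ w, f (a * b * x + (b * Real.sqrt (1 - a ^ 2) * z + Real.sqrt (1 - b ^ 2) * w))
          ∂(gaussianReal 0 1) ∂(gaussianReal 0 1) := by simp_rw [harg]
    _ = ∫ q : ℝ × ℝ, f (a * b * x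
          + (b * Real.sqrt (1 - a ^ 2) * q.1 + Real.sqrt (1 - b ^ 2) * q.2))
          ∂((gaussianReal 0 1).prod (gaussianReal 0 1)) := hfub
    _ = ∫ u, f (a * b * x + Real.sqrt ((b * Real.sqrt (1 - a ^ 2)) ^ 2
          + Real.sqrt (1 - b ^ 2) ^ 2) * u) ∂(gaussianReal 0 1) :=
        int_combo hf (by positivity) hσb (a * b * x)
    _ = Tker (a * b) f x := by rw [hkey]; rfl

/-- Cauchy-Schwarz for probability measures. -/
lemma sq_int_le {α : Type*} [MeasurableSpace α] (ν : Measure α) [IsProbabilityMeasure ν]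
    {h : α → ℝ} (hm : AEStronglyMeasurable h ν) (hh0 : ∀ x, 0 ≤ h x) (hh1 : ∀ x, h x ≤ 1) :
    (∫ x, h x ∂ν) ^ 2 ≤ ∫ x, h x ^ 2 ∂ν := by
  have hint : Integrable h ν := integrable_of_le_one hm hh0 hh1
  have hm2 : AEStronglyMeasurable (fun x => h x ^ 2) ν := by
    have : (fun x => h x ^ 2) = fun x => h x * h x := by funext x; ring
    rw [this]; exact hm.mul hm
  have hint2 : Integrable (fun x => h x ^ 2) ν :=
    integrable_of_le_one hm2 (fun x => sq_nonneg _)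
      (fun x => pow_le_one₀ (hh0 x) (hh1 x))
  set m := ∫ x, h x ∂ν with hm'
  have key : 0 ≤ ∫ x, (h x - m) ^ 2 ∂ν := integral_nonneg fun x => sq_nonneg _
  have expand : ∫ x, (h x - m) ^ 2 ∂ν = (∫ x, h x ^ 2 ∂ν) - m ^ 2 := by
    have e1 : (fun x => (h x - m) ^ 2)
        = fun x => (h x ^ 2 - 2 * m * h x) + m ^ 2 := by funext x; ring
    have hB : Integrable (fun x => 2 * m * h x) ν := hint.const_mul (2 * m)
    have hA : Integrable (fun x => h x ^ 2 - 2 * m * h x) ν := hint2.sub hB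
    rw [e1, integral_add hA (integrable_const (m ^ 2)), integral_sub hint2 hB,
      integral_const_mul, integral_const]
    simp only [measureReal_def, measure_univ, ENNReal.toReal_one, smul_eq_mul, one_mul, ← hm']
    ring
  nlinarith [key, expand]

/-- Contraction in L². -/
lemma Tker_sq_int_le {g : ℝ → ℝ} (hg : Measurable g) (hg0 : ∀ x, 0 ≤ g x) (hg1 : ∀ x, g x ≤ 1)
    {r : ℝ} (hr0 : 0 ≤ r) (hr1 : r < 1) :
    ∫ x, (Tker r g x) ^ 2 ∂(gaussianReal 0 1) ≤ ∫ x, g x ^ 2 ∂(gaussianReal 0 1) := by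
  have hg2 : Measurable (fun y => g y ^ 2) := by
    have : (fun y => g y ^ 2) = fun y => g y * g y := by funext y; ring
    rw [this]; exact hg.mul hg
  have hg20 : ∀ y, 0 ≤ g y ^ 2 := fun y => sq_nonneg _
  have hg21 : ∀ y, g y ^ 2 ≤ 1 := fun y => pow_le_one₀ (hg0 y) (hg1 y)
  have step1 : ∀ x, (Tker r g x) ^ 2 ≤ Tker r (fun y => g y ^ 2) x := by
    intro x
    exact sq_int_le (gaussianReal 0 1)
      ((hg.comp (by fun_prop : Measurable fun z : ℝ =>
        r * x + Real.sqrt (1 - r ^ 2) * z)).aestronglyMeasurable)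
      (fun z => hg0 _) (fun z => hg1 _)
  have hTmeas := Tker_meas r hg
  have hT2int : Integrable (fun x => (Tker r g x) ^ 2) (gaussianReal 0 1) := by
    have hm : Measurable fun x => (Tker r g x) ^ 2 := by
      have : (fun x => (Tker r g x) ^ 2) = fun x => Tker r g x * Tker r g x := by
        funext x; ring
      rw [this]; exact hTmeas.mul hTmeas
    exact integrable_of_le_one hm.aestronglyMeasurable (fun x => sq_nonneg _)
      (fun x => pow_le_one₀ (Tker_nonneg hg0 r x) (Tker_le_one hg hg0 hg1 r x))
  have hTg2int : Integrable (Tker r (fun y => g y ^ 2)) (gaussianReal 0 1) :=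
    integrable_of_le_one (Tker_meas r hg2).aestronglyMeasurable
      (Tker_nonneg hg20 r) (Tker_le_one hg2 hg20 hg21 r)
  calc ∫ x, (Tker r g x) ^ 2 ∂(gaussianReal 0 1)
      ≤ ∫ x, Tker r (fun y => g y ^ 2) x ∂(gaussianReal 0 1) :=
        integral_mono hT2int hTg2int step1
    _ = ∫ x, g x ^ 2 ∂(gaussianReal 0 1) := int_Tker hg2 hg20 hg21 hr0 hr1

end Core





section Key

variable {f : ℝ → ℝ}

/-- The key self-adjointness identity: `⟨f, T_{s²} f⟩ = ‖T_s f‖²`. -/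
lemma Tker_sq_eq (hf : Measurable f) (h0 : ∀ x, 0 ≤ f x) (h1 : ∀ x, f x ≤ 1)
    {s : ℝ} (hs0 : 0 ≤ s) (hs1 : s < 1) :
    ∫ x, f x * Tker (s ^ 2) f x ∂(gaussianReal 0 1)
      = ∫ x, (Tker s f x) ^ 2 ∂(gaussianReal 0 1) := by
  have h1s : (0:ℝ) < 1 - s ^ 2 := by nlinarith
  set c : ℝ := Real.sqrt (1 - s ^ 2) with hcdef
  have hc : 0 < c := Real.sqrt_pos.mpr h1s
  have hc2 : c ^ 2 = 1 - s ^ 2 := Real.sq_sqrt h1s.le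
  -- the triple integrand
  set H : (ℝ × ℝ) × ℝ → ℝ :=
    fun q => f (s * q.1.1 + c * q.1.2) * f (s * q.1.1 + c * q.2) with hHdef
  have hHmeas : Measurable H := by
    apply Measurable.mul <;> exact hf.comp (by fun_prop)
  have hH0 : ∀ q, 0 ≤ H q := fun q => mul_nonneg (h0 _) (h0 _)
  have hH1 : ∀ q, H q ≤ 1 := fun q => mul_le_one₀ (h1 _) (h0 _) (h1 _)
  have hHint : Integrable H
      (((gaussianReal 0 1).prod (gaussianReal 0 1)).prod (gaussianReal 0 1)) :=
    integrable_of_le_one hHmeas.aestronglyMeasurable hH0 hH1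
  -- Step A : ∫ H = ∫ (T_s f)²
  have stepA : ∫ q, H q ∂(((gaussianReal 0 1).prod (gaussianReal 0 1)).prod (gaussianReal 0 1))
      = ∫ x, (Tker s f x) ^ 2 ∂(gaussianReal 0 1) := by
    rw [integral_prod _ hHint]
    have inner1 : ∀ p : ℝ × ℝ, (∫ z', H (p, z') ∂(gaussianReal 0 1))
        = f (s * p.1 + c * p.2) * Tker s f p.1 := by
      intro p
      simp only [hHdef]
      rw [integral_const_mul]
      rfl
    simp_rw [inner1]
    have hint2 : Integrable (fun p : ℝ × ℝ => f (s * p.1 + c * p.2) * Tker s f p.1)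
        ((gaussianReal 0 1).prod (gaussianReal 0 1)) := by
      refine integrable_of_le_one ?_ (fun p => mul_nonneg (h0 _) (Tker_nonneg h0 s _))
        (fun p => mul_le_one₀ (h1 _) (Tker_nonneg h0 s _) (Tker_le_one hf h0 h1 s _))
      exact ((hf.comp (by fun_prop)).mul ((Tker_meas s hf).comp measurable_fst)).aestronglyMeasurable
    rw [integral_prod _ hint2]
    congr 1
    funext x
    show (∫ z, f (s * x + c * z) * Tker s f x ∂(gaussianReal 0 1)) = Tker s f x ^ 2
    rw [integral_mul_const]
    have : (∫ z, f (s * x + c * z) ∂(gaussianReal 0 1)) = Tker s f x := rfl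
    rw [this, sq]
  -- Step B : ∫ H = ∫ f ⬝ T_{s²} f
  -- the reflection (x,z) ↦ (s x + c z, c x - s z) preserves γ ⊗ γ
  have mpRf : MeasurePreserving (fun p : ℝ × ℝ => (s * p.1 + c * p.2, c * p.1 - s * p.2))
      ((gaussianReal 0 1).prod (gaussianReal 0 1))
      ((gaussianReal 0 1).prod (gaussianReal 0 1)) := by
    have hrot := rot_gauss hc.le hs0 (by linarith [hc2] : c ^ 2 + s ^ 2 = 1)
    have hsw := Measure.measurePreserving_swap (μ := gaussianReal 0 1) (ν := gaussianReal 0 1)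
    have hcomp := hrot.comp hsw
    have heq : ((fun p : ℝ × ℝ => (c * p.1 + s * p.2, -s * p.1 + c * p.2)) ∘ Prod.swap)
        = fun p : ℝ × ℝ => (s * p.1 + c * p.2, c * p.1 - s * p.2) := by
      funext p
      refine Prod.ext ?_ ?_ <;> simp [Prod.swap] <;> ring
    rwa [heq] at hcomp
  have mpΦ : MeasurePreserving
      (fun q : (ℝ × ℝ) × ℝ => ((s * q.1.1 + c * q.1.2, c * q.1.1 - s * q.1.2), q.2))
      (((gaussianReal 0 1).prod (gaussianReal 0 1)).prod (gaussianReal 0 1))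
      (((gaussianReal 0 1).prod (gaussianReal 0 1)).prod (gaussianReal 0 1)) :=
    mpRf.prod (MeasurePreserving.id _)
  have stepB1 : ∫ q, H q ∂(((gaussianReal 0 1).prod (gaussianReal 0 1)).prod (gaussianReal 0 1))
      = ∫ q : (ℝ × ℝ) × ℝ, f q.1.1 * f (s ^ 2 * q.1.1 + (s * c * q.1.2 + c * q.2))
          ∂(((gaussianReal 0 1).prod (gaussianReal 0 1)).prod (gaussianReal 0 1)) := by
    conv_lhs => rw [← mpΦ.map_eq]
    rw [integral_map mpΦ.measurable.aemeasurable hHmeas.aestronglyMeasurable]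
    congr 1
    funext q
    simp only [hHdef]
    have e1 : s * (s * q.1.1 + c * q.1.2) + c * (c * q.1.1 - s * q.1.2) = q.1.1 := by
      linear_combination q.1.1 * hc2
    have e2 : s * (s * q.1.1 + c * q.1.2) + c * q.2
        = s ^ 2 * q.1.1 + (s * c * q.1.2 + c * q.2) := by ring
    rw [e1, e2]
  have stepB2 : ∫ q : (ℝ × ℝ) × ℝ, f q.1.1 * f (s ^ 2 * q.1.1 + (s * c * q.1.2 + c * q.2))
        ∂(((gaussianReal 0 1).prod (gaussianReal 0 1)).prod (gaussianReal 0 1))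
      = ∫ x, f x * Tker (s ^ 2) f x ∂(gaussianReal 0 1) := by
    have mpA := measurePreserving_prodAssoc (gaussianReal 0 1) (gaussianReal 0 1)
      (gaussianReal 0 1)
    set G : ℝ × (ℝ × ℝ) → ℝ :=
      fun r => f r.1 * f (s ^ 2 * r.1 + (s * c * r.2.1 + c * r.2.2)) with hGdef
    have hGmeas : Measurable G := by
      apply Measurable.mul <;> exact hf.comp (by fun_prop)
    have hG : ∫ q : (ℝ × ℝ) × ℝ, f q.1.1 * f (s ^ 2 * q.1.1 + (s * c * q.1.2 + c * q.2))
          ∂(((gaussianReal 0 1).prod (gaussianReal 0 1)).prod (gaussianReal 0 1))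
        = ∫ r, G r ∂((gaussianReal 0 1).prod ((gaussianReal 0 1).prod (gaussianReal 0 1))) := by
      rw [← mpA.map_eq, integral_map mpA.measurable.aemeasurable hGmeas.aestronglyMeasurable]
      rfl
    rw [hG]
    have hGint : Integrable G ((gaussianReal 0 1).prod
        ((gaussianReal 0 1).prod (gaussianReal 0 1))) :=
      integrable_of_le_one hGmeas.aestronglyMeasurable
        (fun r => mul_nonneg (h0 _) (h0 _))
        (fun r => mul_le_one₀ (h1 _) (h0 _) (h1 _))
    rw [integral_prod _ hGint]
    congr 1
    funext x
    show (∫ p : ℝ × ℝ, f x * f (s ^ 2 * x + (s * c * p.1 + c * p.2))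
      ∂((gaussianReal 0 1).prod (gaussianReal 0 1))) = f x * Tker (s ^ 2) f x
    rw [integral_const_mul]
    congr 1
    have htrans := int_combo hf (a := s * c) (b := c) (by positivity) hc (s ^ 2 * x)
    have hkey : (s * c) ^ 2 + c ^ 2 = 1 - (s ^ 2) ^ 2 := by
      rw [mul_pow, hc2]; ring
    rw [hkey] at htrans
    exact htrans.trans rfl
  rw [← stepB2, ← stepB1, stepA]

end Key





section Chain

variable {f : ℝ → ℝ}

/-- Monotonicity of `⟨f, T_ρ f⟩` in `ρ`. -/
lemma Tker_inner_mono (hf : Measurable f) (h0 : ∀ x, 0 ≤ f x) (h1 : ∀ x, f x ≤ 1)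
    {ρ1 ρ2 : ℝ} (h10 : 0 ≤ ρ1) (hle : ρ1 ≤ ρ2) (h21 : ρ2 < 1) :
    ∫ x, f x * Tker ρ1 f x ∂(gaussianReal 0 1)
      ≤ ∫ x, f x * Tker ρ2 f x ∂(gaussianReal 0 1) := by
  rcases eq_or_lt_of_le hle with rfl | hlt
  · exact le_refl _
  have h20 : 0 < ρ2 := lt_of_le_of_lt h10 hlt
  set s1 : ℝ := Real.sqrt ρ1 with hs1def
  set s2 : ℝ := Real.sqrt ρ2 with hs2def
  have hs1sq : s1 ^ 2 = ρ1 := Real.sq_sqrt h10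
  have hs2sq : s2 ^ 2 = ρ2 := Real.sq_sqrt h20.le
  have hs2pos : 0 < s2 := Real.sqrt_pos.mpr h20
  have hs1nonneg : 0 ≤ s1 := Real.sqrt_nonneg _
  have hs1lt1 : s1 < 1 := by
    rw [hs1def, show (1:ℝ) = Real.sqrt 1 by simp]
    exact Real.sqrt_lt_sqrt h10 (lt_trans hlt h21)
  have hs2lt1 : s2 < 1 := by
    rw [hs2def, show (1:ℝ) = Real.sqrt 1 by simp]
    exact Real.sqrt_lt_sqrt h20.le h21
  set r : ℝ := s1 / s2 with hrdef
  have hr0 : 0 ≤ r := div_nonneg hs1nonneg hs2pos.le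
  have hr1 : r < 1 := by
    rw [hrdef, div_lt_one hs2pos]
    exact Real.sqrt_lt_sqrt h10 hlt
  have hrs2 : r * s2 = s1 := div_mul_cancel₀ _ (ne_of_gt hs2pos)
  have hTs2meas : Measurable (Tker s2 f) := Tker_meas s2 hf
  have hTs20 : ∀ x, 0 ≤ Tker s2 f x := Tker_nonneg h0 s2
  have hTs21 : ∀ x, Tker s2 f x ≤ 1 := Tker_le_one hf h0 h1 s2
  calc ∫ x, f x * Tker ρ1 f x ∂(gaussianReal 0 1)
      = ∫ x, f x * Tker (s1 ^ 2) f x ∂(gaussianReal 0 1) := by rw [hs1sq]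
    _ = ∫ x, (Tker s1 f x) ^ 2 ∂(gaussianReal 0 1) := Tker_sq_eq hf h0 h1 hs1nonneg hs1lt1
    _ = ∫ x, (Tker r (Tker s2 f) x) ^ 2 ∂(gaussianReal 0 1) := by
        congr 1
        funext x
        rw [Tker_comp hf h0 h1 hr0 hr1.le hs2pos.le hs2lt1 x, hrs2]
    _ ≤ ∫ x, (Tker s2 f x) ^ 2 ∂(gaussianReal 0 1) :=
        Tker_sq_int_le hTs2meas hTs20 hTs21 hr0 hr1
    _ = ∫ x, f x * Tker (s2 ^ 2) f x ∂(gaussianReal 0 1) :=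
        (Tker_sq_eq hf h0 h1 hs2pos.le hs2lt1).symm
    _ = ∫ x, f x * Tker ρ2 f x ∂(gaussianReal 0 1) := by rw [hs2sq]

end Chain

section Cells

variable {w : ℝ} (hw : 0 < w)

/-- quantization cell -/
def Icell (w : ℝ) (k : ℤ) : Set ℝ := Set.Ico (k * w) (k * w + w)

include hw in
lemma mem_cell_iff (x : ℝ) (k : ℤ) : ⌊x / w⌋ = k ↔ x ∈ Icell w k := by
  rw [Int.floor_eq_iff, Icell, Set.mem_Ico]
  constructor
  · rintro ⟨hl, hr⟩
    refine ⟨?_, ?_⟩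
    · rwa [le_div_iff₀ hw] at hl
    · rw [div_lt_iff₀ hw] at hr
      calc x < (↑k + 1) * w := hr
        _ = ↑k * w + w := by ring
  · rintro ⟨hl, hr⟩
    refine ⟨?_, ?_⟩
    · rwa [le_div_iff₀ hw]
    · rw [div_lt_iff₀ hw]
      calc x < ↑k * w + w := hr
        _ = (↑k + 1) * w := by ring

/-- cell event -/
def cellEv (w ρ : ℝ) (k : ℤ) : Set (ℝ × ℝ) :=
  {p : ℝ × ℝ | p.1 ∈ Icell w k ∧ (ρ * p.1 + Real.sqrt (1 - ρ ^ 2) * p.2) ∈ Icell w k}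

lemma cellEv_meas (ρ : ℝ) (k : ℤ) : MeasurableSet (cellEv w ρ k) := by
  refine MeasurableSet.inter ?_ ?_
  · exact measurable_fst measurableSet_Ico
  · exact (by fun_prop : Measurable fun p : ℝ × ℝ =>
      ρ * p.1 + Real.sqrt (1 - ρ ^ 2) * p.2) measurableSet_Ico

include hw in
lemma ev_eq_iUnion (ρ : ℝ) :
    {p : ℝ × ℝ | ⌊p.1 / w⌋ = ⌊(ρ * p.1 + Real.sqrt (1 - ρ ^ 2) * p.2) / w⌋}
      = ⋃ k : ℤ, cellEv w ρ k := by
  ext p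
  simp only [Set.mem_setOf_eq, Set.mem_iUnion]
  constructor
  · intro h
    exact ⟨⌊p.1 / w⌋, (mem_cell_iff hw _ _).mp rfl, (mem_cell_iff hw _ _).mp h.symm⟩
  · rintro ⟨k, h1, h2⟩
    rw [(mem_cell_iff hw _ _).mpr h1, (mem_cell_iff hw _ _).mpr h2]

include hw in
lemma cellEv_disjoint (ρ : ℝ) : Pairwise (Function.onFun Disjoint (cellEv w ρ)) := by
  intro k k' hkk'
  rw [Function.onFun, Set.disjoint_left]
  rintro p ⟨h1, _⟩ ⟨h1', _⟩
  exact hkk' (((mem_cell_iff hw _ _).mpr h1).symm.trans ((mem_cell_iff hw _ _).mpr h1'))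

/-- indicator of a cell -/
noncomputable def fcell (w : ℝ) (k : ℤ) : ℝ → ℝ := (Icell w k).indicator (fun _ => 1)

lemma fcell_meas (k : ℤ) : Measurable (fcell w k) :=
  measurable_const.indicator measurableSet_Ico

lemma fcell_nonneg (k : ℤ) : ∀ x, 0 ≤ fcell w k x :=
  fun x => Set.indicator_nonneg (fun _ _ => zero_le_one) x

lemma fcell_le_one (k : ℤ) : ∀ x, fcell w k x ≤ 1 := by
  intro x
  by_cases h : x ∈ Icell w k <;> simp [fcell, h]

/-- the measure of a cell event as an inner product -/
lemma cellEv_toReal (ρ : ℝ) (k : ℤ) :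
    ((((gaussianReal 0 1).prod (gaussianReal 0 1)) (cellEv w ρ k)).toReal)
      = ∫ x, fcell w k x * Tker ρ (fcell w k) x ∂(gaussianReal 0 1) := by
  rw [← measureReal_def, ← integral_indicator_one (cellEv_meas ρ k)]
  have hind : (cellEv w ρ k).indicator (1 : ℝ × ℝ → ℝ)
      = fun p : ℝ × ℝ => fcell w k p.1
        * fcell w k (ρ * p.1 + Real.sqrt (1 - ρ ^ 2) * p.2) := by
    funext p
    by_cases h1 : p.1 ∈ Icell w k <;>
      by_cases h2 : (ρ * p.1 + Real.sqrt (1 - ρ ^ 2) * p.2) ∈ Icell w k <;>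
      simp [cellEv, fcell, h1, h2]
  rw [hind]
  have hint : Integrable (fun p : ℝ × ℝ => fcell w k p.1
      * fcell w k (ρ * p.1 + Real.sqrt (1 - ρ ^ 2) * p.2))
      ((gaussianReal 0 1).prod (gaussianReal 0 1)) := by
    refine integrable_of_le_one ?_
      (fun p => mul_nonneg (fcell_nonneg k _) (fcell_nonneg k _))
      (fun p => mul_le_one₀ (fcell_le_one k _) (fcell_nonneg k _) (fcell_le_one k _))
    exact (((fcell_meas k).comp measurable_fst).mul
      ((fcell_meas k).comp (by fun_prop))).aestronglyMeasurable
  rw [integral_prod _ hint]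
  congr 1
  funext x
  show (∫ z, fcell w k x * fcell w k (ρ * x + Real.sqrt (1 - ρ ^ 2) * z)
    ∂(gaussianReal 0 1)) = fcell w k x * Tker ρ (fcell w k) x
  rw [integral_const_mul]
  rfl

include hw in
/-- Monotonicity of the collision probability measure. -/
lemma collision_mono {ρ1 ρ2 : ℝ} (h10 : 0 ≤ ρ1) (hle : ρ1 ≤ ρ2) (h21 : ρ2 < 1) :
    ((gaussianReal 0 1).prod (gaussianReal 0 1))
        {p : ℝ × ℝ | ⌊p.1 / w⌋ = ⌊(ρ1 * p.1 + Real.sqrt (1 - ρ1 ^ 2) * p.2) / w⌋}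
      ≤ ((gaussianReal 0 1).prod (gaussianReal 0 1))
        {p : ℝ × ℝ | ⌊p.1 / w⌋ = ⌊(ρ2 * p.1 + Real.sqrt (1 - ρ2 ^ 2) * p.2) / w⌋} := by
  rw [ev_eq_iUnion hw ρ1, ev_eq_iUnion hw ρ2,
    measure_iUnion (cellEv_disjoint hw ρ1) (cellEv_meas ρ1),
    measure_iUnion (cellEv_disjoint hw ρ2) (cellEv_meas ρ2)]
  refine ENNReal.tsum_le_tsum fun k => ?_
  have key : ((((gaussianReal 0 1).prod (gaussianReal 0 1)) (cellEv w ρ1 k)).toReal)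
      ≤ ((((gaussianReal 0 1).prod (gaussianReal 0 1)) (cellEv w ρ2 k)).toReal) := by
    rw [cellEv_toReal ρ1 k, cellEv_toReal ρ2 k]
    exact Tker_inner_mono (fcell_meas k) (fcell_nonneg k) (fcell_le_one k) h10 hle h21
  exact (ENNReal.toReal_le_toReal (measure_ne_top _ _) (measure_ne_top _ _)).mp key

end Cells





section Limit

variable {w : ℝ} (hw : 0 < w)

include hw in
lemma ev_meas (ρ : ℝ) :
    MeasurableSet {p : ℝ × ℝ | ⌊p.1 / w⌋ = ⌊(ρ * p.1 + Real.sqrt (1 - ρ ^ 2) * p.2) / w⌋} := by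
  rw [ev_eq_iUnion hw ρ]
  exact MeasurableSet.iUnion (cellEv_meas ρ)

include hw in
lemma collision_tendsto :
    Tendsto
      (fun ρ : ℝ => (((gaussianReal 0 1).prod (gaussianReal 0 1))
        {p : ℝ × ℝ | ⌊p.1 / w⌋ = ⌊(ρ * p.1 + Real.sqrt (1 - ρ ^ 2) * p.2) / w⌋}).toReal)
      (nhdsWithin 1 (Set.Iio 1)) (nhds 1) := by
  set μ2 := (gaussianReal 0 1).prod (gaussianReal 0 1) with hμ2
  set E : ℝ → Set (ℝ × ℝ) := fun ρ =>
    {p : ℝ × ℝ | ⌊p.1 / w⌋ = ⌊(ρ * p.1 + Real.sqrt (1 - ρ ^ 2) * p.2) / w⌋} with hEdef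
  set F : ℝ → (ℝ × ℝ) → ℝ := fun ρ => (E ρ).indicator (1 : ℝ × ℝ → ℝ) with hFdef
  -- null set of bad first coordinates
  set N : Set (ℝ × ℝ) := ⋃ k : ℤ, {p : ℝ × ℝ | p.1 = (k : ℝ) * w} with hNdef
  have hNnull : μ2 N = 0 := by
    refine measure_iUnion_null fun k => ?_
    have : {p : ℝ × ℝ | p.1 = (k : ℝ) * w} = ({(k : ℝ) * w} : Set ℝ) ×ˢ (Set.univ : Set ℝ) := by
      ext p
      simp only [Set.mem_setOf_eq, Set.mem_prod, Set.mem_singleton_iff, Set.mem_univ, and_true]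
    rw [this, hμ2, Measure.prod_prod]
    have hγ : (gaussianReal 0 1) {(k : ℝ) * w} = 0 :=
      gaussianReal_absolutelyContinuous 0 one_ne_zero (measure_singleton _)
    rw [hγ, zero_mul]
  -- a.e. convergence of indicators
  have h_lim : ∀ᵐ p ∂μ2, Tendsto (fun ρ => F ρ p) (nhdsWithin 1 (Set.Iio 1))
      (nhds ((fun _ : ℝ × ℝ => (1:ℝ)) p)) := by
    refine (ae_iff.mpr ?_)
    refine measure_mono_null (fun p hp => ?_) hNnull
    simp only [Set.mem_setOf_eq] at hp
    by_contra hpN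
    apply hp
    have hpk : ∀ k : ℤ, p.1 ≠ (k : ℝ) * w := by
      intro k hk
      exact hpN (Set.mem_iUnion.mpr ⟨k, hk⟩)
    set k : ℤ := ⌊p.1 / w⌋ with hkdef
    have hmem : p.1 ∈ Icell w k := (mem_cell_iff hw _ _).mp rfl
    have hlt : (k : ℝ) * w < p.1 := lt_of_le_of_ne hmem.1 (Ne.symm (hpk k))
    have hmemIoo : p.1 ∈ Set.Ioo ((k : ℝ) * w) ((k : ℝ) * w + w) := ⟨hlt, hmem.2⟩
    have hcont : Tendsto (fun ρ : ℝ => ρ * p.1 + Real.sqrt (1 - ρ ^ 2) * p.2)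
        (nhdsWithin 1 (Set.Iio 1)) (nhds p.1) := by
      have hc : Continuous (fun ρ : ℝ => ρ * p.1 + Real.sqrt (1 - ρ ^ 2) * p.2) := by
        refine Continuous.add (continuous_id.mul continuous_const) ?_
        exact (Real.continuous_sqrt.comp (by continuity)).mul continuous_const
      have := hc.tendsto 1
      simp only [one_mul, one_pow, sub_self, Real.sqrt_zero, zero_mul, add_zero] at this
      exact this.mono_left nhdsWithin_le_nhds
    have hev : ∀ᶠ ρ in nhdsWithin 1 (Set.Iio 1),
        (ρ * p.1 + Real.sqrt (1 - ρ ^ 2) * p.2) ∈ Set.Ioo ((k : ℝ) * w) ((k : ℝ) * w + w) :=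
      hcont.eventually (isOpen_Ioo.mem_nhds hmemIoo)
    have hev1 : ∀ᶠ ρ in nhdsWithin 1 (Set.Iio 1), F ρ p = 1 := by
      filter_upwards [hev] with ρ hρ
      have hinE : p ∈ E ρ := by
        simp only [hEdef, Set.mem_setOf_eq]
        rw [← hkdef, (mem_cell_iff hw _ _).mpr ⟨hρ.1.le, hρ.2⟩]
      simp [hFdef, hinE]
    exact Tendsto.congr' (hev1.mono fun ρ h => h.symm) tendsto_const_nhds
  have key := tendsto_integral_filter_of_dominated_convergence
    (μ := μ2) (F := F) (f := fun _ : ℝ × ℝ => (1:ℝ)) (l := nhdsWithin 1 (Set.Iio 1))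
    (bound := fun _ => (1:ℝ))
    (Eventually.of_forall fun ρ =>
      ((measurable_const.indicator (ev_meas hw ρ)).aestronglyMeasurable))
    (Eventually.of_forall fun ρ => ae_of_all _ fun p => by
      by_cases h : p ∈ E ρ <;> simp [hFdef, h])
    (integrable_const 1)
    h_lim
  have hid : (fun ρ : ℝ => (μ2 (E ρ)).toReal) = fun ρ => ∫ p, F ρ p ∂μ2 := by
    funext ρ
    rw [hFdef]
    exact (integral_indicator_one (ev_meas hw ρ)).symm
  rw [hid]
  have hone : ∫ _ : ℝ × ℝ, (1:ℝ) ∂μ2 = 1 := by simp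
  rw [hone] at key
  exact key

end Limit


end Stmt11Aux

open Stmt11Aux in
/-- The collision probability of uniform quantization is monotone increasing in ρ on
[0,1) and tends to 1 as ρ → 1⁻. -/
theorem stmt11 (w : ℝ) (hw : 0 < w) :
    MonotoneOn
      (fun ρ : ℝ => (((gaussianReal 0 1).prod (gaussianReal 0 1))
        {p : ℝ × ℝ | ⌊p.1 / w⌋ = ⌊(ρ * p.1 + Real.sqrt (1 - ρ ^ 2) * p.2) / w⌋}).toReal)
      (Set.Ico (0 : ℝ) 1) ∧
    Filter.Tendsto
      (fun ρ : ℝ => (((gaussianReal 0 1).prod (gaussianReal 0 1))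
        {p : ℝ × ℝ | ⌊p.1 / w⌋ = ⌊(ρ * p.1 + Real.sqrt (1 - ρ ^ 2) * p.2) / w⌋}).toReal)
      (nhdsWithin 1 (Set.Iio 1)) (nhds 1) := by
  constructor
  · intro ρ1 h1 ρ2 h2 hle
    exact ENNReal.toReal_mono (measure_ne_top _ _) (collision_mono hw h1.1 hle h2.2)
  · exact collision_tendsto hw
end

section
/- Let x, y ∈ ℝ with |x - y| = t and w > 0, and let Q ~ Uniform(0, w). If t < w then P(⌊(x+Q)/w⌋ = ⌊(y+Q)/w⌋) = 1 - t/w, and if t ≥ w then this probability is 0. -/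
open MeasureTheory ProbabilityTheory Real Set

lemma floor_add_eq_iff' (u s : ℝ) (hs : 0 ≤ s) : ⌊u + s⌋ = ⌊u⌋ ↔ Int.fract u + s < 1 := by
  have hf : Int.fract u = u - ⌊u⌋ := rfl
  constructor
  · intro h
    have h2 := Int.lt_floor_add_one (u + s)
    rw [h] at h2
    push_cast at h2
    linarith
  · intro h
    rw [Int.floor_eq_iff]
    have := Int.floor_le u
    push_cast
    constructor <;> linarith

lemma collision_set (y t w : ℝ) (hw : 0 < w) (ht0 : 0 ≤ t) (htw : t < w) :
    {q : ℝ | ⌊(y + t + q) / w⌋ = ⌊(y + q) / w⌋} ∩ Set.Ioo 0 w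
      = Set.Ioo 0 (w - t - w * Int.fract (y / w)) ∪
        Set.Ico (w - w * Int.fract (y / w)) (min (2 * w - t - w * Int.fract (y / w)) w) := by
  have hwne : w ≠ 0 := hw.ne'
  set f := Int.fract (y / w) with hfdef
  have hf0 : 0 ≤ f := Int.fract_nonneg _
  have hf1 : f < 1 := Int.fract_lt_one _
  have hst : 0 ≤ t / w := div_nonneg ht0 hw.le
  ext q
  have hqw : q / w * w = q := div_mul_cancel₀ q hwne
  have htww : t / w * w = t := div_mul_cancel₀ t hwne
  have hrw : (y + t + q) / w = (y + q) / w + t / w := by ring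
  have hrw2 : (y + q) / w = (⌊y / w⌋ : ℝ) + (f + q / w) := by
    have : (⌊y / w⌋ : ℝ) + f = y / w := by
      rw [hfdef]; exact Int.floor_add_fract _
    rw [add_div]
    linarith
  have hfr : Int.fract ((y + q) / w) = Int.fract (f + q / w) := by
    rw [hrw2, Int.fract_intCast_add]
  simp only [mem_inter_iff, mem_setOf_eq, mem_Ioo, mem_union, mem_Ico, lt_min_iff]
  rw [hrw, floor_add_eq_iff' _ _ hst, hfr]
  constructor
  · rintro ⟨hcond, hq0, hqw'⟩
    have hq1 : 0 < q / w := div_pos hq0 hw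
    have hq2 : q / w < 1 := (div_lt_one hw).mpr hqw'
    by_cases hc : f + q / w < 1
    · rw [Int.fract_eq_self.mpr ⟨by positivity, hc⟩] at hcond
      left
      refine ⟨hq0, ?_⟩
      nlinarith [mul_lt_mul_of_pos_right hcond hw]
    · push_neg at hc
      have h1 : Int.fract (f + q / w) = f + q / w - 1 := by
        rw [← Int.fract_sub_one, Int.fract_eq_self.mpr ⟨by linarith, by linarith⟩]
      rw [h1] at hcond
      right
      refine ⟨?_, ?_, hqw'⟩
      · nlinarith [mul_le_mul_of_nonneg_right hc hw.le]
      · nlinarith [mul_lt_mul_of_pos_right hcond hw]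
  · rintro (⟨hq0, hqa⟩ | ⟨hqb, hqc, hqw'⟩)
    · have hqw' : q < w := by nlinarith
      have hq1 : 0 < q / w := div_pos hq0 hw
      have hc : f + q / w < 1 := by nlinarith [hqw]
      rw [Int.fract_eq_self.mpr ⟨by positivity, hc⟩]
      refine ⟨?_, hq0, hqw'⟩
      nlinarith [hqw, htww]
    · have hq0 : 0 < q := by nlinarith
      have hq2 : q / w < 1 := (div_lt_one hw).mpr hqw'
      have hc : 1 ≤ f + q / w := by nlinarith [mul_le_mul_of_nonneg_right (le_refl (q/w)) hw.le]
      have h1 : Int.fract (f + q / w) = f + q / w - 1 := by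
        rw [← Int.fract_sub_one, Int.fract_eq_self.mpr ⟨by linarith, by linarith⟩]
      rw [h1]
      refine ⟨?_, hq0, hqw'⟩
      nlinarith

lemma collision_measure (y t w : ℝ) (hw : 0 < w) (ht0 : 0 ≤ t) (htw : t < w) :
    volume ({q : ℝ | ⌊(y + t + q) / w⌋ = ⌊(y + q) / w⌋} ∩ Set.Ioo 0 w)
      = ENNReal.ofReal (w - t) := by
  rw [collision_set y t w hw ht0 htw]
  set f := Int.fract (y / w) with hfdef
  have hf0 : 0 ≤ f := Int.fract_nonneg _
  have hf1 : f < 1 := Int.fract_lt_one _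
  have hwf : 0 ≤ w * f := by positivity
  have hdisj : Disjoint (Set.Ioo (0:ℝ) (w - t - w * f))
      (Set.Ico (w - w * f) (min (2 * w - t - w * f) w)) := by
    rw [Set.disjoint_left]
    rintro q ⟨_, h1⟩ ⟨h2, _⟩
    linarith
  rw [measure_union hdisj measurableSet_Ico, Real.volume_Ioo, Real.volume_Ico]
  by_cases hcase : w * f ≤ w - t
  · rw [min_eq_right (by linarith : w ≤ 2 * w - t - w * f),
      ← ENNReal.ofReal_add (by linarith) (by linarith)]
    congr 1; ring
  · push_neg at hcase
    rw [min_eq_left (by linarith : 2 * w - t - w * f ≤ w),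
      ENNReal.ofReal_eq_zero.mpr (by linarith), zero_add]
    congr 1; ring

lemma main_lt (y t w : ℝ) (hw : 0 < w) (ht0 : 0 ≤ t) (htw : t < w) :
    (((ENNReal.ofReal w)⁻¹ • volume.restrict (Set.Ioo (0 : ℝ) w))
      {q : ℝ | ⌊(y + t + q) / w⌋ = ⌊(y + q) / w⌋}).toReal = 1 - t / w := by
  rw [Measure.smul_apply, Measure.restrict_apply' measurableSet_Ioo,
    collision_measure y t w hw ht0 htw, smul_eq_mul, ENNReal.toReal_mul,
    ENNReal.toReal_inv, ENNReal.toReal_ofReal hw.le,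
    ENNReal.toReal_ofReal (by linarith)]
  field_simp

lemma empty_ge (y t w : ℝ) (hw : 0 < w) (hge : w ≤ t) :
    {q : ℝ | ⌊(y + t + q) / w⌋ = ⌊(y + q) / w⌋} = ∅ := by
  ext q
  simp only [mem_setOf_eq, mem_empty_iff_false, iff_false]
  intro h
  have h1 : (y + t + q) / w = (y + q) / w + t / w := by ring
  have h2 : (1:ℝ) ≤ t / w := (one_le_div hw).mpr hge
  have h5 : (⌊(y + q) / w⌋ + 1 : ℤ) ≤ ⌊(y + q) / w + t / w⌋ :=
    Int.le_floor.mpr (by push_cast; linarith [Int.floor_le ((y + q) / w)])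
  rw [← h1, h] at h5
  omega

/-- Offset-collision lemma: for fixed x, y with |x - y| = t and Q uniform on (0,w),
the collision probability is 1 - t/w if t < w, and 0 if t ≥ w. -/
theorem stmt15 (x y t w : ℝ) (hw : 0 < w) (ht : |x - y| = t) :
    (t < w →
      (((ENNReal.ofReal w)⁻¹ • volume.restrict (Set.Ioo (0 : ℝ) w))
        {q : ℝ | ⌊(x + q) / w⌋ = ⌊(y + q) / w⌋}).toReal = 1 - t / w) ∧
    (w ≤ t →
      (((ENNReal.ofReal w)⁻¹ • volume.restrict (Set.Ioo (0 : ℝ) w))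
        {q : ℝ | ⌊(x + q) / w⌋ = ⌊(y + q) / w⌋}).toReal = 0) := by
  have ht0 : 0 ≤ t := ht ▸ abs_nonneg _
  have hset : {q : ℝ | ⌊(x + q) / w⌋ = ⌊(y + q) / w⌋}
      = {q : ℝ | ⌊(y + q) / w⌋ = ⌊(x + q) / w⌋} := by
    ext q; exact eq_comm
  constructor
  · intro hlt
    rcases le_total y x with h | h
    · have hx : x = y + t := by
        rw [← ht, abs_of_nonneg (by linarith : (0:ℝ) ≤ x - y)]; ring
      rw [hx]
      exact main_lt y t w hw ht0 hlt
    · have hy : y = x + t := by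
        rw [← ht, abs_of_nonpos (by linarith : x - y ≤ 0)]; ring
      rw [hset, hy]
      exact main_lt x t w hw ht0 hlt
  · intro hge
    rcases le_total y x with h | h
    · have hx : x = y + t := by
        rw [← ht, abs_of_nonneg (by linarith : (0:ℝ) ≤ x - y)]; ring
      rw [hx, empty_ge y t w hw hge]
      simp
    · have hy : y = x + t := by
        rw [← ht, abs_of_nonpos (by linarith : x - y ≤ 0)]; ring
      rw [hset, hy, empty_ge x t w hw hge]
      simp
end
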